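/- arXiv:1806.07601 — 4 statements merged into one kernel-verified Lean document; each statement's English description precedes it below -/
import Mathlib

section
/- A generalized Boolean function f : V_n → Z_q is gbent (i.e., |H_f(u)| = 2^{n/2} for all u ∈ V_n) if and only if its weighted adjacency matrix A_f = (ζ^{f(u⊕v)})_{u,v} is a q-Butson Hadamard matrix of dimension 2^n, i.e., A_f · (A_f)^* = 2^n · I. -/
open Finset BigOperators Matrix

noncomputable def zeta (q : ℕ) : ℂ := Complex.exp (2 * Real.pi * Complex.I / q)

def dotp {n : ℕ} (u x : Fin n → ZMod 2) : ZMod 2 := ∑ i, u i * x i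

noncomputable def chr {n : ℕ} (u x : Fin n → ZMod 2) : ℂ := (-1 : ℂ) ^ (dotp u x).val

noncomputable def WHT {n q : ℕ} (f : (Fin n → ZMod 2) → ZMod q) (u : Fin n → ZMod 2) : ℂ :=
  ∑ x, zeta q ^ (f x).val * chr u x

noncomputable def Amat {n q : ℕ} (f : (Fin n → ZMod 2) → ZMod q) :
    Matrix (Fin n → ZMod 2) (Fin n → ZMod 2) ℂ :=
  fun u v => zeta q ^ (f (u + v)).val

lemma negpow (a b : ZMod 2) : ((-1:ℂ))^((a+b).val) = (-1)^a.val * (-1)^b.val := by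
  fin_cases a <;> fin_cases b
  · change (-1:ℂ)^0 = (-1)^0 * (-1)^0; norm_num
  · change (-1:ℂ)^1 = (-1)^0 * (-1)^1; norm_num
  · change (-1:ℂ)^1 = (-1)^1 * (-1)^0; norm_num
  · change (-1:ℂ)^0 = (-1)^1 * (-1)^1; norm_num

lemma dotp_add_right {n : ℕ} (u x y : Fin n → ZMod 2) : dotp u (x+y) = dotp u x + dotp u y := by
  simp [dotp, mul_add, Finset.sum_add_distrib]

lemma dotp_add_left {n : ℕ} (u v x : Fin n → ZMod 2) : dotp (u+v) x = dotp u x + dotp v x := by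
  simp [dotp, add_mul, Finset.sum_add_distrib]

lemma dotp_zero_right {n : ℕ} (u : Fin n → ZMod 2) : dotp u 0 = 0 := by simp [dotp]

lemma chr_add_right {n : ℕ} (u x y : Fin n → ZMod 2) : chr u (x+y) = chr u x * chr u y := by
  rw [chr, dotp_add_right, negpow]; rfl

lemma chr_add_left {n : ℕ} (u v x : Fin n → ZMod 2) : chr (u+v) x = chr u x * chr v x := by
  rw [chr, dotp_add_left, negpow]; rfl

lemma chr_zero_right {n : ℕ} (u : Fin n → ZMod 2) : chr u 0 = 1 := by
  simp [chr, dotp_zero_right]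

lemma chr_conj {n : ℕ} (u x : Fin n → ZMod 2) : (starRingEnd ℂ) (chr u x) = chr u x := by
  simp [chr]

lemma chr_sq {n : ℕ} (u x : Fin n → ZMod 2) : chr u x * chr u x = 1 := by
  rw [chr, ← mul_pow]; norm_num

lemma zmod2_add_self (a : ZMod 2) : a + a = 0 := by revert a; decide

lemma vadd_self {n : ℕ} (x : Fin n → ZMod 2) : x + x = 0 :=
  funext fun i => zmod2_add_self (x i)

lemma sum_chr {n : ℕ} (t : Fin n → ZMod 2) :
    (∑ u, chr u t) = if t = 0 then (2:ℂ)^n else 0 := by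
  split_ifs with h
  · subst h
    simp [chr_zero_right, Finset.card_univ, Fintype.card_fun]
  · obtain ⟨j, hj⟩ : ∃ j, t j ≠ 0 := by
      by_contra hc
      push_neg at hc
      exact h (funext hc)
    have htj : t j = 1 := by
      have : ∀ a : ZMod 2, a ≠ 0 → a = 1 := by decide
      exact this _ hj
    set e : Fin n → ZMod 2 := Pi.single j 1 with he
    have hde : dotp e t = 1 := by
      rw [dotp]
      rw [Finset.sum_eq_single j]
      · simp [he, htj]
      · intro i _ hij; simp [he, Pi.single_apply, hij]
      · simp
    have hce : chr e t = -1 := by rw [chr, hde]; norm_num [show ((1:ZMod 2)).val = 1 from rfl]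
    have key : (∑ u, chr u t) = - ∑ u, chr u t := by
      conv_lhs => rw [← Equiv.sum_comp (Equiv.addLeft e) (fun u => chr u t)]
      simp only [Equiv.coe_addLeft, chr_add_left, hce]
      rw [← Finset.sum_neg_distrib]
      ring_nf
    have h2 : (2:ℂ) * ∑ u, chr u t = 0 := by linear_combination key
    have := mul_eq_zero.mp h2
    simpa using this

lemma veq_iff {n : ℕ} (t s : Fin n → ZMod 2) : t + s = 0 ↔ t = s := by
  constructor
  · intro h
    have := congrArg (· + s) h
    simpa [add_assoc, vadd_self] using this
  · rintro rfl; exact vadd_self t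

lemma wht_sq {n q : ℕ} (f : (Fin n → ZMod 2) → ZMod q) (u : Fin n → ZMod 2) :
    WHT f u * (starRingEnd ℂ) (WHT f u)
      = ∑ t, (∑ y, zeta q ^ (f (y+t)).val * (starRingEnd ℂ) (zeta q ^ (f y).val)) * chr u t := by
  set g : (Fin n → ZMod 2) → ℂ := fun x => zeta q ^ (f x).val with hg
  calc WHT f u * (starRingEnd ℂ) (WHT f u)
      = ∑ y, ∑ x, (g x * chr u x) * ((starRingEnd ℂ) (g y) * chr u y) := by
        rw [WHT, map_sum]
        simp only [_root_.map_mul, chr_conj]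
        rw [Finset.sum_mul_sum, Finset.sum_comm]
    _ = ∑ y, ∑ t, (g (y+t) * chr u (y+t)) * ((starRingEnd ℂ) (g y) * chr u y) := by
        refine Finset.sum_congr rfl fun y _ => ?_
        exact (Equiv.sum_comp (Equiv.addLeft y)
          fun x => (g x * chr u x) * ((starRingEnd ℂ) (g y) * chr u y)).symm
    _ = ∑ y, ∑ t, (g (y+t) * (starRingEnd ℂ) (g y)) * chr u t := by
        refine Finset.sum_congr rfl fun y _ => Finset.sum_congr rfl fun t _ => ?_
        rw [chr_add_right]
        calc g (y+t) * (chr u y * chr u t) * ((starRingEnd ℂ) (g y) * chr u y)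
            = (g (y+t) * (starRingEnd ℂ) (g y) * chr u t) * (chr u y * chr u y) := by ring
          _ = g (y+t) * (starRingEnd ℂ) (g y) * chr u t := by rw [chr_sq, mul_one]
    _ = ∑ t, (∑ y, g (y+t) * (starRingEnd ℂ) (g y)) * chr u t := by
        rw [Finset.sum_comm]
        simp [Finset.sum_mul]

lemma inv_step {n : ℕ} (C : (Fin n → ZMod 2) → ℂ) (s : Fin n → ZMod 2) :
    ∑ u, (∑ t, C t * chr u t) * chr u s = (2:ℂ)^n * C s := by
  calc ∑ u, (∑ t, C t * chr u t) * chr u s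
      = ∑ t, C t * ∑ u, chr u (t + s) := by
        simp only [Finset.sum_mul]
        rw [Finset.sum_comm]
        refine Finset.sum_congr rfl fun t _ => ?_
        rw [Finset.mul_sum]
        refine Finset.sum_congr rfl fun u _ => ?_
        rw [chr_add_right]; ring
    _ = ∑ t, C t * (if t = s then (2:ℂ)^n else 0) := by
        refine Finset.sum_congr rfl fun t _ => ?_
        rw [sum_chr]
        simp [veq_iff]
    _ = (2:ℂ)^n * C s := by
        simp [mul_ite, Finset.sum_ite_eq']
        ring

lemma amat_entry {n q : ℕ} (f : (Fin n → ZMod 2) → ZMod q) (u w : Fin n → ZMod 2) :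
    (Amat f * (Amat f)ᴴ) u w
      = ∑ y, zeta q ^ (f (y+(u+w))).val * (starRingEnd ℂ) (zeta q ^ (f y).val) := by
  set g : (Fin n → ZMod 2) → ℂ := fun x => zeta q ^ (f x).val with hg
  rw [Matrix.mul_apply]
  simp only [Matrix.conjTranspose_apply, Amat, Complex.star_def]
  calc ∑ v, g (u + v) * (starRingEnd ℂ) (g (w + v))
      = ∑ y, g (u + (w + y)) * (starRingEnd ℂ) (g (w + (w + y))) :=
        (Equiv.sum_comp (Equiv.addLeft w)
          fun v => g (u + v) * (starRingEnd ℂ) (g (w + v))).symm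
    _ = ∑ y, g (y + (u + w)) * (starRingEnd ℂ) (g y) := by
        refine Finset.sum_congr rfl fun y _ => ?_
        have h1 : u + (w + y) = y + (u + w) := by abel
        have h2 : w + (w + y) = y := by rw [← add_assoc, vadd_self, zero_add]
        rw [h1, h2]

/-- `f` is gbent iff its weighted adjacency matrix is a `q`-Butson Hadamard matrix of
dimension `2^n`, i.e. `A_f A_f* = 2^n I`. -/
theorem gbent_iff_butson (n q : ℕ) (hq : 0 < q) (f : (Fin n → ZMod 2) → ZMod q) :
    (∀ u : Fin n → ZMod 2, ‖WHT f u‖ = Real.sqrt (2 ^ n)) ↔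
      Amat f * (Amat f)ᴴ = ((2 : ℂ) ^ n) • (1 : Matrix (Fin n → ZMod 2) (Fin n → ZMod 2) ℂ) := by
  have h2n : ((2:ℂ)^n) ≠ 0 := pow_ne_zero n two_ne_zero
  constructor
  · intro hb
    have h1 : ∀ u, WHT f u * (starRingEnd ℂ) (WHT f u) = (2:ℂ)^n := by
      intro u
      rw [Complex.mul_conj]
      have : Complex.normSq (WHT f u) = 2^n := by
        rw [Complex.normSq_eq_norm_sq, hb u, Real.sq_sqrt (by positivity)]
      rw [this]
      push_cast
      ring
    have hC : ∀ s : Fin n → ZMod 2,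
        (∑ y, zeta q ^ (f (y+s)).val * (starRingEnd ℂ) (zeta q ^ (f y).val))
          = if s = 0 then (2:ℂ)^n else 0 := by
      intro s
      have h2 : ∑ u, (∑ t, (∑ y, zeta q ^ (f (y+t)).val
            * (starRingEnd ℂ) (zeta q ^ (f y).val)) * chr u t) * chr u s
          = (2:ℂ)^n * (∑ y, zeta q ^ (f (y+s)).val * (starRingEnd ℂ) (zeta q ^ (f y).val)) :=
        inv_step (fun t => ∑ y, zeta q ^ (f (y+t)).val * (starRingEnd ℂ) (zeta q ^ (f y).val)) s
      have h3 : ∑ u, ((2:ℂ)^n) * chr u s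
          = (2:ℂ)^n * (∑ y, zeta q ^ (f (y+s)).val * (starRingEnd ℂ) (zeta q ^ (f y).val)) := by
        rw [← h2]
        refine Finset.sum_congr rfl fun u _ => ?_
        rw [← wht_sq f u, h1 u]
      rw [← Finset.mul_sum, sum_chr] at h3
      exact (mul_left_cancel₀ h2n h3).symm
    ext u w
    rw [amat_entry, hC (u + w)]
    simp only [Matrix.smul_apply, Matrix.one_apply, veq_iff, smul_eq_mul]
    split_ifs <;> simp
  · intro hA u
    have hC : ∀ s : Fin n → ZMod 2,
        (∑ y, zeta q ^ (f (y+s)).val * (starRingEnd ℂ) (zeta q ^ (f y).val))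
          = if s = 0 then (2:ℂ)^n else 0 := by
      intro s
      have h := congrFun (congrFun hA s) 0
      rw [amat_entry] at h
      simp only [add_zero] at h
      rw [h]
      simp only [Matrix.smul_apply, Matrix.one_apply, smul_eq_mul]
      split_ifs <;> simp
    have h1 : WHT f u * (starRingEnd ℂ) (WHT f u) = (2:ℂ)^n := by
      rw [wht_sq]
      calc ∑ t, (∑ y, zeta q ^ (f (y+t)).val * (starRingEnd ℂ) (zeta q ^ (f y).val)) * chr u t
          = ∑ t, (if t = 0 then (2:ℂ)^n else 0) * chr u t :=
            Finset.sum_congr rfl fun t _ => by rw [hC t]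
        _ = (2:ℂ)^n := by
            simp [ite_mul, Finset.sum_ite_eq', chr_zero_right]
    have h2 : ‖WHT f u‖^2 = 2^n := by
      rw [Complex.mul_conj] at h1
      have : Complex.normSq (WHT f u) = 2^n := by exact_mod_cast h1
      rw [← this, Complex.normSq_eq_norm_sq]
    rw [← h2, Real.sqrt_sq (norm_nonneg _)]
end

section
/- Let f = a_0 + 2a_1 : V_n → Z_4 with a_0, a_1 Boolean functions and n even. If f is gbent, then for any two pairs of vertices {a,b} and {c,d}, |N_{{1,2}}(a,b)| = |N_{{1,2}}(c,d)|, where N_{{1,2}}(a,b) = {w : f(w⊕a) ∈ {1,2}, f(w⊕b) ∈ {1,2}}. -/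
open Finset BigOperators

namespace GbAux

lemma sq_mod4 (a : ℤ) : a^2 % 4 = 0 ∨ a^2 % 4 = 1 := by
  rcases Int.even_or_odd a with ⟨k,hk⟩|⟨k,hk⟩
  · left; have h : a^2 = 4*k^2 := by rw [hk]; ring
    omega
  · right; have h : a^2 = 4*(k^2+k)+1 := by rw [hk]; ring
    have := sq_nonneg a; omega

lemma even_of_sq (a : ℤ) (h : a^2 % 4 = 0) : ∃ k, a = 2*k := by
  rcases Int.even_or_odd a with ⟨k,hk⟩|⟨k,hk⟩
  · exact ⟨k, by omega⟩
  · exfalso; have h2 : a^2 = 4*(k^2+k)+1 := by rw [hk]; ring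
    omega

lemma two_sq_pow : ∀ (m : ℕ) (a b : ℤ), a^2 + b^2 = 2 * 4^m → b^2 = 4^m := by
  intro m
  induction m with
  | zero =>
    intro a b h
    have h1 := sq_mod4 a; have h2 := sq_mod4 b
    have ha := sq_nonneg a; have hb := sq_nonneg b
    simp only [pow_zero] at h ⊢; omega
  | succ m ih =>
    intro a b h
    have h4 : (a^2 + b^2) % 4 = 0 := by
      have : a^2 + b^2 = 4 * (2 * 4^m) := by rw [h]; ring
      omega
    have h1 := sq_mod4 a; have h2 := sq_mod4 b
    have ha' : a^2 % 4 = 0 := by omega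
    have hb' : b^2 % 4 = 0 := by omega
    obtain ⟨a', rfl⟩ := even_of_sq a ha'
    obtain ⟨b', rfl⟩ := even_of_sq b hb'
    have e1 : (2*a')^2 = 4*a'^2 := by ring
    have e2 : (2*b')^2 = 4*b'^2 := by ring
    have e3 : (4:ℤ)^(m+1) = 4*4^m := by ring
    have h' : a'^2 + b'^2 = 2 * 4^m := by rw [e1, e2, e3] at h; linarith
    rw [e2, ih a' b' h']; ring

def chi (x : ZMod 2) : ℤ := (-1) ^ x.val

lemma chi_zero : chi 0 = 1 := rfl
lemma chi_add : ∀ x y : ZMod 2, chi (x + y) = chi x * chi y := by decide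

lemma chi_sum {ι : Type*} (s : Finset ι) (f : ι → ZMod 2) :
    chi (∑ i ∈ s, f i) = ∏ i ∈ s, chi (f i) := by
  induction s using Finset.cons_induction with
  | empty => simp [chi_zero]
  | cons a s ha ih => rw [Finset.sum_cons, Finset.prod_cons, chi_add, ih]

lemma dotp_add {n : ℕ} (u x y : Fin n → ZMod 2) :
    dotp u (x + y) = dotp u x + dotp u y := by
  simp only [dotp, Pi.add_apply, mul_add, Finset.sum_add_distrib]

lemma sum_chi_dotp {n : ℕ} (v : Fin n → ZMod 2) :
    ∑ u : Fin n → ZMod 2, chi (dotp u v) = if v = 0 then 2^n else 0 := by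
  have key : ∀ u : Fin n → ZMod 2, chi (dotp u v) = ∏ i, chi (u i * v i) := by
    intro u; rw [dotp, chi_sum]
  rw [Finset.sum_congr rfl (fun u _ => key u),
    ← Fintype.prod_sum (fun (i : Fin n) (b : ZMod 2) => chi (b * v i))]
  have cell : ∀ c : ZMod 2, (∑ b : ZMod 2, chi (b * c)) = if c = 0 then 2 else 0 := by decide
  by_cases hv : v = 0
  · subst hv; simp [cell, chi_zero]
  · rw [if_neg hv]
    obtain ⟨i, hi⟩ : ∃ i, v i ≠ 0 := by
      by_contra hc; push_neg at hc; exact hv (funext fun i => hc i)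
    apply Finset.prod_eq_zero (Finset.mem_univ i)
    rw [cell, if_neg hi]

lemma add_self {n : ℕ} (v : Fin n → ZMod 2) : v + v = 0 := by
  have h : ∀ a : ZMod 2, a + a = 0 := by decide
  funext i; exact h (v i)

lemma autocorr {n : ℕ} (g : (Fin n → ZMod 2) → ZMod 2)
    (hsq : ∀ u, (∑ x, chi (g x) * chi (dotp u x))^2 = 2^n)
    {e : Fin n → ZMod 2} (he : e ≠ 0) :
    ∑ x, chi (g x) * chi (g (x + e)) = 0 := by
  have hcond : ∀ x y : Fin n → ZMod 2, (x + y + e = 0) ↔ (y = x + e) := by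
    intro x y
    constructor
    · intro h
      have h2 : (x + e) + (x + y + e) = (x + e) + 0 := by rw [h]
      have h3 : (x + e) + (x + y + e) = (x + x) + (e + e) + y := by abel
      rw [h3, add_self, add_self, add_zero] at h2
      simpa using h2
    · rintro rfl
      have h3 : x + (x + e) + e = (x + x) + (e + e) := by abel
      rw [h3, add_self, add_self, add_zero]
  have hu : ∀ u : Fin n → ZMod 2,
      (∑ x, chi (g x) * chi (dotp u x))^2 * chi (dotp u e)
        = ∑ x, ∑ y, chi (g x) * chi (g y) * chi (dotp u (x + y + e)) := by
    intro u
    rw [sq, Finset.sum_mul_sum, Finset.sum_mul]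
    refine Finset.sum_congr rfl fun x _ => ?_
    rw [Finset.sum_mul]
    refine Finset.sum_congr rfl fun y _ => ?_
    rw [dotp_add, dotp_add, chi_add, chi_add]
    ring
  have way2 : (∑ u : Fin n → ZMod 2, (∑ x, chi (g x) * chi (dotp u x))^2 * chi (dotp u e))
      = 2^n * ∑ x, chi (g x) * chi (g (x + e)) := by
    rw [Finset.sum_congr rfl (fun u _ => hu u)]
    rw [Finset.sum_comm]
    have inner : ∀ x : Fin n → ZMod 2,
        (∑ u : Fin n → ZMod 2, ∑ y, chi (g x) * chi (g y) * chi (dotp u (x + y + e)))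
        = 2^n * (chi (g x) * chi (g (x + e))) := by
      intro x
      rw [Finset.sum_comm]
      have : ∀ y : Fin n → ZMod 2,
          (∑ u : Fin n → ZMod 2, chi (g x) * chi (g y) * chi (dotp u (x + y + e)))
          = if y = x + e then chi (g x) * chi (g y) * 2^n else 0 := by
        intro y
        rw [← Finset.mul_sum, sum_chi_dotp]
        simp only [hcond x y, mul_ite, mul_zero]
      rw [Finset.sum_congr rfl (fun y _ => this y), Finset.sum_ite_eq' Finset.univ (x + e)
        (fun y => chi (g x) * chi (g y) * 2^n), if_pos (Finset.mem_univ _)]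
      ring
    rw [Finset.sum_congr rfl (fun x _ => inner x), ← Finset.mul_sum]
  have way1 : (∑ u : Fin n → ZMod 2, (∑ x, chi (g x) * chi (dotp u x))^2 * chi (dotp u e))
      = 0 := by
    rw [Finset.sum_congr rfl (fun u _ => by rw [hsq u]),
      ← Finset.mul_sum, sum_chi_dotp, if_neg he, mul_zero]
  rw [way1] at way2
  have h2n : (2:ℤ)^n ≠ 0 := by positivity
  exact (mul_eq_zero.mp way2.symm).resolve_left h2n

lemma zmod2_cases : ∀ x : ZMod 2, x = 0 ∨ x = 1 := by decide

end GbAux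

open GbAux

/-- If `f = a₀ + 2a₁ : V_n → Z₄` (`n` even) is gbent, then `|N_{{1,2}}(a,b)|` is the same for
all pairs of distinct vertices. -/
theorem gbent_N12_constant (n : ℕ) (hn : Even n)
    (f : (Fin n → ZMod 2) → ZMod 4) (a0 a1 : (Fin n → ZMod 2) → ZMod 2)
    (hf : ∀ x, f x = (((a0 x).val + 2 * (a1 x).val : ℕ) : ZMod 4))
    (hgbent : ∀ u : Fin n → ZMod 2,
      ‖∑ x, Complex.I ^ (f x).val * chr u x‖ = Real.sqrt (2 ^ n)) :
    ∀ a b c d : Fin n → ZMod 2, a ≠ b → c ≠ d →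
      (univ.filter (fun w : Fin n → ZMod 2 =>
        f (w + a) ∈ ({1, 2} : Finset (ZMod 4)) ∧ f (w + b) ∈ ({1, 2} : Finset (ZMod 4)))).card =
      (univ.filter (fun w : Fin n → ZMod 2 =>
        f (w + c) ∈ ({1, 2} : Finset (ZMod 4)) ∧ f (w + d) ∈ ({1, 2} : Finset (ZMod 4)))).card := by
  intro a b c d hab hcd
  obtain ⟨m, hm⟩ := hn
  set g : (Fin n → ZMod 2) → ZMod 2 := fun x => a0 x + a1 x with hg
  -- membership characterization
  have hmem : ∀ x, (f x ∈ ({1, 2} : Finset (ZMod 4))) ↔ g x = 1 := by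
    intro x
    rw [hf x, show g x = a0 x + a1 x from rfl]
    rcases zmod2_cases (a0 x) with h0 | h0 <;> rcases zmod2_cases (a1 x) with h1 | h1 <;>
      rw [h0, h1] <;> decide
  -- the pointwise identity for I ^ (f x).val
  have hpt : ∀ x, (Complex.I) ^ (f x).val
      = ((1 + Complex.I) * ((chi (a1 x) : ℤ) : ℂ)
        + (1 - Complex.I) * ((chi (g x) : ℤ) : ℂ)) / 2 := by
    intro x
    rw [hf x, show g x = a0 x + a1 x from rfl]
    rcases zmod2_cases (a0 x) with h0 | h0 <;> rcases zmod2_cases (a1 x) with h1 | h1 <;>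
      rw [h0, h1]
    · rw [show (((((0:ZMod 2)).val + 2 * ((0:ZMod 2)).val : ℕ) : ZMod 4)).val = 0 from by decide,
        show ((0:ZMod 2))+((0:ZMod 2)) = (0:ZMod 2) from by decide, show chi 0 = 1 from rfl]
      push_cast; ring_nf
    · rw [show (((((0:ZMod 2)).val + 2 * ((1:ZMod 2)).val : ℕ) : ZMod 4)).val = 2 from by decide,
        show ((0:ZMod 2))+((1:ZMod 2)) = (1:ZMod 2) from by decide, show chi 1 = -1 from rfl]
      push_cast; simp [pow_succ, Complex.I_sq]; ring_nf
    · rw [show (((((1:ZMod 2)).val + 2 * ((0:ZMod 2)).val : ℕ) : ZMod 4)).val = 1 from by decide,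
        show ((1:ZMod 2))+((0:ZMod 2)) = (1:ZMod 2) from by decide, show chi 1 = -1 from rfl,
        show chi 0 = 1 from rfl]
      push_cast; ring_nf
    · rw [show (((((1:ZMod 2)).val + 2 * ((1:ZMod 2)).val : ℕ) : ZMod 4)).val = 3 from by decide,
        show ((1:ZMod 2))+((1:ZMod 2)) = (0:ZMod 2) from by decide, show chi 1 = -1 from rfl,
        show chi 0 = 1 from rfl]
      push_cast; simp [pow_succ, Complex.I_sq]; ring_nf
  -- gbentness gives the square condition for g
  have hsq : ∀ u, (∑ x, chi (g x) * chi (dotp u x))^2 = 2^n := by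
    intro u
    set A : ℤ := ∑ x, chi (a1 x) * chi (dotp u x) with hA
    set B : ℤ := ∑ x, chi (g x) * chi (dotp u x) with hB
    have hchr : ∀ x, chr u x = ((chi (dotp u x) : ℤ) : ℂ) := by
      intro x; unfold chr chi; push_cast; ring
    have hH : (∑ x, Complex.I ^ (f x).val * chr u x)
        = ((((A + B : ℤ) : ℝ) / 2 : ℝ) : ℂ) + ((((A - B : ℤ) : ℝ) / 2 : ℝ) : ℂ) * Complex.I := by
      have hterm : ∀ x, Complex.I ^ (f x).val * chr u x
          = ((1 + Complex.I) / 2) * ((chi (a1 x) * chi (dotp u x) : ℤ) : ℂ)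
            + ((1 - Complex.I) / 2) * ((chi (g x) * chi (dotp u x) : ℤ) : ℂ) := by
        intro x
        rw [hpt x, hchr x]
        push_cast
        ring
      rw [Finset.sum_congr rfl (fun x _ => hterm x), Finset.sum_add_distrib,
        ← Finset.mul_sum, ← Finset.mul_sum, ← Int.cast_sum, ← Int.cast_sum, ← hA, ← hB]
      push_cast
      ring
    have hnorm := hgbent u
    rw [hH] at hnorm
    have hns : Complex.normSq ((((A + B : ℤ) : ℝ) / 2 : ℝ) + (((A - B : ℤ) : ℝ) / 2 : ℝ) * Complex.I : ℂ)
        = ((A + B : ℤ) : ℝ)^2 / 4 + ((A - B : ℤ) : ℝ)^2 / 4 := by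
      rw [Complex.normSq_add_mul_I]
      ring
    have habs : ‖((((A + B : ℤ) : ℝ) / 2 : ℝ) : ℂ) + ((((A - B : ℤ) : ℝ) / 2 : ℝ) : ℂ) * Complex.I‖
        = Real.sqrt (((A + B : ℤ) : ℝ)^2 / 4 + ((A - B : ℤ) : ℝ)^2 / 4) := by
      rw [Complex.norm_def, hns]
    rw [habs] at hnorm
    have h2n : (0:ℝ) ≤ 2 ^ n := by positivity
    have hq : ((A + B : ℤ) : ℝ)^2 / 4 + ((A - B : ℤ) : ℝ)^2 / 4 = 2 ^ n := by
      have hnn : (0:ℝ) ≤ ((A + B : ℤ) : ℝ)^2 / 4 + ((A - B : ℤ) : ℝ)^2 / 4 := by positivity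
      rw [← Real.sq_sqrt hnn, hnorm, Real.sq_sqrt h2n]
    have hAB : (A:ℝ)^2 + (B:ℝ)^2 = 2 * 2 ^ n := by push_cast at hq ⊢; nlinarith [hq]
    have hABz : A^2 + B^2 = 2 * 2 ^ n := by exact_mod_cast hAB
    have h2m : (2:ℤ) ^ n = 4 ^ m := by
      rw [hm, ← two_mul, pow_mul]; norm_num
    rw [h2m] at hABz ⊢
    exact two_sq_pow m A B hABz
  -- counting
  have count : ∀ p q : Fin n → ZMod 2, p ≠ q →
      (4 : ℤ) * ((univ.filter (fun w : Fin n → ZMod 2 =>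
        f (w + p) ∈ ({1, 2} : Finset (ZMod 4)) ∧ f (w + q) ∈ ({1, 2} : Finset (ZMod 4)))).card)
      = 2^n - 2 * (∑ x, chi (g x)) := by
    intro p q hpq
    have hfilter : (univ.filter (fun w : Fin n → ZMod 2 =>
        f (w + p) ∈ ({1, 2} : Finset (ZMod 4)) ∧ f (w + q) ∈ ({1, 2} : Finset (ZMod 4))))
        = univ.filter (fun w => g (w + p) = 1 ∧ g (w + q) = 1) := by
      apply Finset.filter_congr
      intro w _
      rw [hmem, hmem]
    have hptw : ∀ α β : ZMod 2, (1 - chi α) * (1 - chi β)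
        = if α = 1 ∧ β = 1 then 4 else 0 := by decide
    have expand : (∑ w : Fin n → ZMod 2, (1 - chi (g (w + p))) * (1 - chi (g (w + q))))
        = 2^n - 2 * (∑ x, chi (g x)) := by
      have e1 : (∑ w : Fin n → ZMod 2, chi (g (w + p))) = ∑ x, chi (g x) :=
        Equiv.sum_comp (Equiv.addRight p) (fun x => chi (g x))
      have e2 : (∑ w : Fin n → ZMod 2, chi (g (w + q))) = ∑ x, chi (g x) :=
        Equiv.sum_comp (Equiv.addRight q) (fun x => chi (g x))
      have e3 : (∑ w : Fin n → ZMod 2, chi (g (w + p)) * chi (g (w + q))) = 0 := by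
        have he : p + q ≠ 0 := by
          intro h
          apply hpq
          have : p + (p + q) = p + 0 := by rw [h]
          rw [← add_assoc, add_self, zero_add, add_zero] at this
          exact this.symm
        have reindex : (∑ x : Fin n → ZMod 2, chi (g (x + p)) * chi (g (x + q)))
            = ∑ x, chi (g x) * chi (g (x + (p + q))) := by
          have := Equiv.sum_comp (Equiv.addRight p)
            (fun w => chi (g (w + p)) * chi (g (w + q)))
          rw [← this]
          refine Finset.sum_congr rfl fun x _ => ?_
          have hx1 : (Equiv.addRight p) x + p = x := by
            simp [Equiv.addRight, add_assoc, add_self]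
          have hx2 : (Equiv.addRight p) x + q = x + (p + q) := by
            simp [Equiv.addRight, add_assoc]
          rw [hx1, hx2]
        rw [reindex]
        exact autocorr g hsq he
      have pointsum : (∑ w : Fin n → ZMod 2, (1 - chi (g (w + p))) * (1 - chi (g (w + q))))
          = (∑ w : Fin n → ZMod 2, (1 : ℤ)) - (∑ w : Fin n → ZMod 2, chi (g (w + p)))
            - (∑ w : Fin n → ZMod 2, chi (g (w + q)))
            + (∑ w : Fin n → ZMod 2, chi (g (w + p)) * chi (g (w + q))) := by
        rw [← Finset.sum_sub_distrib, ← Finset.sum_sub_distrib, ← Finset.sum_add_distrib]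
        exact Finset.sum_congr rfl fun w _ => by ring
      have card1 : (∑ w : Fin n → ZMod 2, (1 : ℤ)) = 2^n := by
        rw [Finset.sum_const, Finset.card_univ]
        simp [Fintype.card_fun]
      rw [pointsum, e1, e2, e3, card1]
      ring
    have ite_form : (∑ w : Fin n → ZMod 2, (1 - chi (g (w + p))) * (1 - chi (g (w + q))))
        = 4 * ((univ.filter (fun w => g (w + p) = 1 ∧ g (w + q) = 1)).card : ℤ) := by
      rw [Finset.sum_congr rfl (fun w _ => hptw (g (w + p)) (g (w + q)))]
      rw [Finset.sum_ite, Finset.sum_const, Finset.sum_const_zero, add_zero, nsmul_eq_mul]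
      ring
    rw [hfilter, ← ite_form, expand]
  have h1 := count a b hab
  have h2 := count c d hcd
  omega
end

section
/- Let S be a bent set in B_n (every element of S is bent and the sum of any two distinct elements of S is bent), and let a_0, a_1 ∈ S with a_0 ≠ a_1. Then f = a_0 + 2a_1 : V_n → Z_4 is gbent. -/
open Finset BigOperators

/-- A Boolean function is bent if its Walsh–Hadamard spectrum is flat. -/
def IsBent {n : ℕ} (g : (Fin n → ZMod 2) → ZMod 2) : Prop :=
  ∀ u : Fin n → ZMod 2, ‖∑ x, (-1 : ℂ) ^ (g x + dotp u x).val‖ = Real.sqrt (2 ^ n)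

lemma negpow_val_add (x y : ZMod 2) :
    (-1:ℂ)^((x+y).val) = (-1:ℂ)^x.val * (-1:ℂ)^y.val := by
  rw [← pow_add, neg_one_pow_eq_pow_mod_two, neg_one_pow_eq_pow_mod_two (n := x.val + y.val)]
  congr 1
  rw [ZMod.val_add]; exact Nat.mod_mod_of_dvd _ dvd_rfl

lemma negpow_val_add3 (x y z : ZMod 2) :
    (-1:ℂ)^((x+y+z).val) = (-1:ℂ)^(x.val + (y.val + z.val)) := by
  rw [negpow_val_add, negpow_val_add, pow_add, pow_add, mul_assoc]

lemma key (a b c : ℕ) (ha : a < 2) (hb : b < 2) (hc : c < 2) :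
    Complex.I ^ (((a + 2*b : ℕ) : ZMod 4)).val * (-1:ℂ)^c
      = (1+Complex.I)/2 * (-1:ℂ)^(b+c) + (1-Complex.I)/2 * (-1:ℂ)^(a+(b+c)) := by
  interval_cases a <;> interval_cases b <;> interval_cases c <;>
    norm_num [ZMod.val_natCast, Complex.ext_iff, pow_succ,
      show (1:ZMod 4).val = 1 from rfl, show (2:ZMod 4).val = 2 from rfl,
      show (3:ZMod 4).val = 3 from rfl]

/-- If `S` is a bent set and `a₀ ≠ a₁` are in `S`, then `f = a₀ + 2a₁` is gbent. -/
theorem bent_set_gbent (n : ℕ) (hn : Even n)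
    (S : Set ((Fin n → ZMod 2) → ZMod 2))
    (hS : ∀ g ∈ S, IsBent g)
    (hSsum : ∀ g ∈ S, ∀ h ∈ S, g ≠ h → IsBent (g + h))
    (a0 a1 : (Fin n → ZMod 2) → ZMod 2) (ha0 : a0 ∈ S) (ha1 : a1 ∈ S) (hne : a0 ≠ a1)
    (f : (Fin n → ZMod 2) → ZMod 4)
    (hf : ∀ x, f x = (((a0 x).val + 2 * (a1 x).val : ℕ) : ZMod 4)) :
    ∀ u : Fin n → ZMod 2,
      ‖∑ x, Complex.I ^ (f x).val * chr u x‖ = Real.sqrt (2 ^ n) := by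
  intro u
  set r1 : ℝ := ∑ x, (-1:ℝ)^((a1 x + dotp u x).val) with hr1def
  set r2 : ℝ := ∑ x, (-1:ℝ)^((a0 x + a1 x + dotp u x).val) with hr2def
  have e1 : ((r1:ℝ):ℂ) = ∑ x, (-1:ℂ)^((a1 x + dotp u x).val) := by
    rw [hr1def]; push_cast; ring
  have e2 : ((r2:ℝ):ℂ) = ∑ x, (-1:ℂ)^((a0 x + a1 x + dotp u x).val) := by
    rw [hr2def]; push_cast; ring
  -- spectra
  have h1 : |r1| = Real.sqrt (2 ^ n) := by
    have := hS a1 ha1 u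
    rw [← e1] at this
    simpa using this
  have h2 : |r2| = Real.sqrt (2 ^ n) := by
    have := hSsum a0 ha0 a1 ha1 hne u
    rw [show (∑ x, (-1:ℂ) ^ ((a0+a1) x + dotp u x).val)
        = ∑ x, (-1:ℂ)^((a0 x + a1 x + dotp u x).val) from rfl, ← e2] at this
    simpa using this
  have pos : (0:ℝ) ≤ 2 ^ n := by positivity
  have hr1sq : r1 ^ 2 = 2 ^ n := by
    rw [← sq_abs, h1, Real.sq_sqrt pos]
  have hr2sq : r2 ^ 2 = 2 ^ n := by
    rw [← sq_abs, h2, Real.sq_sqrt pos]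
  -- decompose the generalized Walsh transform
  have hdecomp : (∑ x, Complex.I ^ (f x).val * chr u x)
      = (1+Complex.I)/2 * ((r1:ℝ):ℂ) + (1-Complex.I)/2 * ((r2:ℝ):ℂ) := by
    rw [e1, e2, mul_sum, mul_sum, ← sum_add_distrib]
    refine Finset.sum_congr rfl fun x _ => ?_
    rw [hf x, chr, key ((a0 x).val) ((a1 x).val) ((dotp u x).val)
        (ZMod.val_lt _) (ZMod.val_lt _) (ZMod.val_lt _)]
    rw [negpow_val_add3, negpow_val_add]; ring
  rw [hdecomp]
  rw [Complex.norm_def]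
  rw [show Real.sqrt (2^n) = Real.sqrt ((2:ℝ)^n) by norm_num]
  congr 1
  simp only [Complex.normSq_apply, Complex.add_re, Complex.add_im, Complex.mul_re,
    Complex.mul_im, Complex.div_re, Complex.div_im, Complex.one_re, Complex.one_im,
    Complex.I_re, Complex.I_im, Complex.sub_re, Complex.sub_im, Complex.ofReal_re,
    Complex.ofReal_im, Complex.re_ofNat, Complex.im_ofNat]
  ring_nf
  nlinarith [hr1sq, hr2sq]
end

section
/- Let f ∈ GB_n^{2^k} with binary decomposition f = a_0 + 2a_1 + ... + 2^{k−1}a_{k−1}, a_i : V_n → F_2. Fix c = (c_0,...,c_{k−2}) ∈ F_2^{k−1} and set f_c = c_0 a_0 ⊕ ... ⊕ c_{k−2} a_{k−2} ⊕ a_{k−1}. Then for every u ∈ V_n: f_c(u) = 1 if and only if f(u) ∈ X_c^1, where X_c^1 = { ι(c̃) + ι(d) : c̃ ⪯ (c,1), wt(c̃) odd, d ⪯ c̄ }, with ι the canonical binary-to-integer map on appropriate coordinates, c̄ the complement of c (extended by 0 in the last coordinate), and ⪯ coordinatewise order. -/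
open Finset BigOperators

/-- The set `X_c^1 = { ι(c̃) + ι(d) : c̃ ⪯ (c,1), wt(c̃) odd, d ⪯ c̄ } ⊆ Z_{2^k}`, where `c` is
identified with the function on `Fin k` whose last value is `1` (i.e. `(c,1)`), and `c̄` is the
bitwise complement of `c` on the first `k-1` coordinates (with last coordinate `0`). -/
def Xc1 (k : ℕ) (c : Fin k → ZMod 2) : Set (ZMod (2 ^ k)) :=
  { t | ∃ ct dd : Fin k → ZMod 2,
      (∀ i, (ct i).val ≤ (c i).val) ∧
      (∀ i : Fin k, ((i : ℕ) < k - 1 → (dd i).val ≤ 1 - (c i).val) ∧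
                    ((i : ℕ) = k - 1 → (dd i).val = 0)) ∧
      Odd (∑ i, (ct i).val) ∧
      t = (((∑ i, (ct i).val * 2 ^ (i : ℕ)) + ∑ i, (dd i).val * 2 ^ (i : ℕ) : ℕ) :
            ZMod (2 ^ k)) }

lemma zmod2_val_le (a : ZMod 2) : a.val ≤ 1 := by revert a; decide
lemma zmod2_cases (a : ZMod 2) : a = 0 ∨ a = 1 := by revert a; decide
lemma zmod2_val_cast (a : ZMod 2) : ((a.val : ℕ) : ZMod 2) = a := by revert a; decide
lemma zmod2_mul_val (a b : ZMod 2) : (a * b).val = a.val * b.val := by revert a b; decide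
lemma zmod2_one_sub_val (a : ZMod 2) : (1 - a).val = 1 - a.val := by revert a; decide
lemma zmod2_split (a b : ZMod 2) : (a * b).val + ((1 - a) * b).val = b.val := by revert a b; decide

lemma natCast_zmod2_eq_one_iff (N : ℕ) : ((N : ZMod 2) = 1) ↔ Odd N := by
  rw [Nat.odd_iff, ← ZMod.natCast_mod N 2]
  rcases Nat.mod_two_eq_zero_or_one N with h | h <;> rw [h] <;> simp

lemma sum_zmod2_eq_one_iff {ι : Type*} (s : Finset ι) (g : ι → ZMod 2) :
    (∑ i ∈ s, g i = 1) ↔ Odd (∑ i ∈ s, (g i).val) := by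
  rw [← natCast_zmod2_eq_one_iff, Nat.cast_sum]
  simp_rw [zmod2_val_cast]

lemma tail_sum {k : ℕ} (g : Fin (k+1) → ℕ) :
    ∑ i : Fin k, g i.succ * 2 ^ ((i.succ : Fin (k+1)) : ℕ) = 2 * ∑ i : Fin k, g i.succ * 2 ^ (i : ℕ) := by
  rw [Finset.mul_sum]; apply Finset.sum_congr rfl; intro i _
  rw [Fin.val_succ, pow_succ]; ring

lemma sum_two_pow_lt {k : ℕ} (d : Fin k → ℕ) (hd : ∀ i, d i ≤ 1) :
    ∑ i, d i * 2 ^ (i : ℕ) < 2 ^ k := by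
  induction k with
  | zero => simp
  | succ k ih =>
    rw [Fin.sum_univ_succ, tail_sum d]
    have h1 : ∑ i : Fin k, d i.succ * 2 ^ (i : ℕ) < 2 ^ k := ih (fun i => d i.succ) (fun i => hd i.succ)
    have h0 := hd 0
    simp only [Fin.val_zero, pow_zero, mul_one]
    rw [pow_succ]
    omega

lemma digits_unique {k : ℕ} (d e : Fin k → ℕ) (hd : ∀ i, d i ≤ 1) (he : ∀ i, e i ≤ 1)
    (h : ∑ i, d i * 2 ^ (i : ℕ) = ∑ i, e i * 2 ^ (i : ℕ)) : ∀ i, d i = e i := by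
  induction k with
  | zero => exact fun i => i.elim0
  | succ k ih =>
    rw [Fin.sum_univ_succ, Fin.sum_univ_succ, tail_sum d, tail_sum e] at h
    simp only [Fin.val_zero, pow_zero, mul_one] at h
    have hd0 := hd 0; have he0 := he 0
    have h0 : d 0 = e 0 := by omega
    have ht : ∑ i : Fin k, d i.succ * 2 ^ (i : ℕ) = ∑ i : Fin k, e i.succ * 2 ^ (i : ℕ) := by omega
    have hrec : ∀ j : Fin k, d j.succ = e j.succ := ih (fun i => d i.succ) (fun i => e i.succ) (fun i => hd i.succ)
      (fun i => he i.succ) ht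
    intro i
    exact Fin.cases h0 (fun j => hrec j) i

/-- For `f = Σ 2^i a_i : V_n → Z_{2^k}` and `c` with last coordinate `1` (representing `(c,1)`
for `c ∈ F_2^{k-1}`), the component function `f_c = Σ c_i a_i` satisfies
`f_c(u) = 1 ↔ f(u) ∈ X_c^1`. -/
theorem component_eq_one_iff_mem_Xc1 (n k : ℕ) (hk : 0 < k)
    (f : (Fin n → ZMod 2) → ZMod (2 ^ k))
    (a : Fin k → (Fin n → ZMod 2) → ZMod 2)
    (hf : ∀ x, (f x).val = ∑ i : Fin k, (a i x).val * 2 ^ (i : ℕ))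
    (c : Fin k → ZMod 2) (hc : c ⟨k - 1, by omega⟩ = 1) :
    ∀ u : Fin n → ZMod 2, (∑ i, c i * a i u) = 1 ↔ f u ∈ Xc1 k c := by
  haveI : NeZero (2 ^ k) := ⟨by positivity⟩
  intro u
  set b : Fin k → ZMod 2 := fun i => a i u with hb
  have hval : (f u).val = ∑ i, (b i).val * 2 ^ (i : ℕ) := hf u
  have hclast : ∀ i : Fin k, (i : ℕ) = k - 1 → c i = 1 := by
    intro i hi
    have : i = ⟨k - 1, by omega⟩ := Fin.ext hi
    rw [this, hc]
  constructor
  · intro h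
    refine ⟨fun i => c i * b i, fun i => if (i : ℕ) = k - 1 then 0 else (1 - c i) * b i,
        ?_, ?_, ?_, ?_⟩
    · intro i
      rw [zmod2_mul_val]
      calc (c i).val * (b i).val ≤ (c i).val * 1 :=
            Nat.mul_le_mul_left _ (zmod2_val_le _)
        _ = (c i).val := mul_one _
    · intro i
      constructor
      · intro hi
        show ((if (i : ℕ) = k - 1 then 0 else (1 - c i) * b i : ZMod 2)).val ≤ 1 - (c i).val
        rw [if_neg (by omega : ¬ (i : ℕ) = k - 1), zmod2_mul_val, zmod2_one_sub_val]
        calc (1 - (c i).val) * (b i).val ≤ (1 - (c i).val) * 1 :=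
              Nat.mul_le_mul_left _ (zmod2_val_le _)
          _ = 1 - (c i).val := mul_one _
      · intro hi
        show ((if (i : ℕ) = k - 1 then 0 else (1 - c i) * b i : ZMod 2)).val = 0
        rw [if_pos hi]; rfl
    · exact (sum_zmod2_eq_one_iff _ _).mp h
    · have key : (∑ i, (c i * b i).val * 2 ^ (i : ℕ)) +
          ∑ i : Fin k, ((if (i.val) = k - 1 then 0 else (1 - c i) * b i) : ZMod 2).val * 2 ^ (i.val)
          = ∑ i, (b i).val * 2 ^ (i : ℕ) := by
        rw [← Finset.sum_add_distrib]
        apply Finset.sum_congr rfl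
        intro i _
        rw [← add_mul]
        congr 1
        by_cases hi : (i : ℕ) = k - 1
        · rw [if_pos hi, hclast i hi, one_mul, ZMod.val_zero, add_zero]
        · rw [if_neg hi, zmod2_split]
      rw [key, ← hval, ZMod.natCast_val, ZMod.cast_id]
  · rintro ⟨ct, dd, hct, hdd, hodd, heq⟩
    have hddle : ∀ i : Fin k, (ct i).val + (dd i).val ≤ 1 := by
      intro i
      have h1 := zmod2_val_le (c i)
      have h2 := hct i
      by_cases hi : (i : ℕ) = k - 1
      · have := (hdd i).2 hi; omega
      · have hlt : (i : ℕ) < k - 1 := by have := i.isLt; omega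
        have := (hdd i).1 hlt; omega
    have hS : (∑ i, (ct i).val * 2 ^ (i : ℕ)) + ∑ i, (dd i).val * 2 ^ (i : ℕ)
        = ∑ i, ((ct i).val + (dd i).val) * 2 ^ (i : ℕ) := by
      rw [← Finset.sum_add_distrib]
      apply Finset.sum_congr rfl
      intro i _; rw [add_mul]
    have hSlt : ∑ i, ((ct i).val + (dd i).val) * 2 ^ (i : ℕ) < 2 ^ k :=
      sum_two_pow_lt _ hddle
    have hvalS : (f u).val = ∑ i, ((ct i).val + (dd i).val) * 2 ^ (i : ℕ) := by
      rw [heq, hS, ZMod.val_natCast, Nat.mod_eq_of_lt hSlt]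
    have hdig : ∀ i, (b i).val = (ct i).val + (dd i).val :=
      digits_unique _ _ (fun i => zmod2_val_le _) hddle (hval.symm.trans hvalS)
    rw [sum_zmod2_eq_one_iff]
    have hterm : ∀ i : Fin k, (c i * b i).val = (ct i).val := by
      intro i
      rw [zmod2_mul_val, hdig i]
      have h2 := hct i
      rcases zmod2_cases (c i) with h | h
      · rw [h] at h2 ⊢
        simp only [ZMod.val_zero, zero_mul] at h2 ⊢
        omega
      · rw [h]
        have hv1 : (1 : ZMod 2).val = 1 := rfl
        have hdd0 : (dd i).val = 0 := by
          by_cases hi : (i : ℕ) = k - 1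
          · exact (hdd i).2 hi
          · have hlt : (i : ℕ) < k - 1 := by have := i.isLt; omega
            have h3 := (hdd i).1 hlt
            rw [h] at h3
            omega
        rw [hdd0, add_zero, hv1, one_mul]
    convert hodd using 1
    exact Finset.sum_congr rfl (fun i _ => hterm i)
end
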